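/- Let C ⊆ ℝ^n be nonempty, closed, and convex, and let f be differentiable with L-Lipschitz gradient on C. For x ∈ C and η ≤ 1/L, let x⁺ = proj_C(x - η ∇f(x)). Then f(x⁺) ≤ f(x) - (1/(2η))‖x⁺ - x‖². -/

import Mathlib

set_option maxHeartbeats 1000000


open scoped RealInnerProductSpace

/-- Sufficient decrease of a projected gradient step with stepsize `η ≤ 1/L`. -/
theorem stmt5 {n : ℕ} (f : EuclideanSpace ℝ (Fin n) → ℝ)
    (f' : EuclideanSpace ℝ (Fin n) → EuclideanSpace ℝ (Fin n))
    (C : Set (EuclideanSpace ℝ (Fin n))) (L : ℝ)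
    (hCne : C.Nonempty) (hCcl : IsClosed C) (hCcv : Convex ℝ C)
    (hdiff : ∀ x ∈ C, HasGradientAt f (f' x) x)
    (hlip : ∀ x ∈ C, ∀ y ∈ C, ‖f' x - f' y‖ ≤ L * ‖x - y‖)
    (hL : 0 < L) (x : EuclideanSpace ℝ (Fin n)) (hx : x ∈ C)
    (η : ℝ) (hη : 0 < η) (hηL : η ≤ 1 / L)
    (xp : EuclideanSpace ℝ (Fin n)) (hxpC : xp ∈ C)
    (hxp : ∀ z ∈ C, ‖x - η • f' x - xp‖ ≤ ‖x - η • f' x - z‖) :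
    f xp ≤ f x - 1 / (2 * η) * ‖xp - x‖ ^ 2 := by
  set v := xp - x with hv
  set γ : ℝ → EuclideanSpace ℝ (Fin n) := fun t => x + t • v with hγ
  have hγmem : ∀ t ∈ Set.uIcc (0:ℝ) 1, γ t ∈ C := by
    intro t ht
    rw [Set.uIcc_of_le zero_le_one] at ht
    have := hCcv hx hxpC (a := 1 - t) (b := t) (by linarith [ht.2]) ht.1 (by ring)
    convert this using 1
    simp only [hγ, hv]
    module
  -- derivative of f along the segment
  have hderiv : ∀ t ∈ Set.uIcc (0:ℝ) 1,
      HasDerivAt (fun t => f (γ t)) ⟪f' (γ t), v⟫ t := by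
    intro t ht
    have hg := (hdiff _ (hγmem t ht)).hasFDerivAt
    have hline : HasDerivAt γ v t := by
      simpa [hγ] using ((hasDerivAt_id t).smul_const v).const_add x
    have := hg.comp_hasDerivAt t hline
    simp only [InnerProductSpace.toDual_apply_apply] at this
    exact this
  -- continuity of the derivative
  have hcont : ContinuousOn (fun t => ⟪f' (γ t), v⟫) (Set.uIcc (0:ℝ) 1) := by
    have hlipg : LipschitzOnWith (Real.toNNReal (L * ‖v‖)) (fun t => f' (γ t))
        (Set.uIcc (0:ℝ) 1) := by
      rw [lipschitzOnWith_iff_dist_le_mul]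
      intro s hs t ht
      have := hlip _ (hγmem s hs) _ (hγmem t ht)
      rw [dist_eq_norm]
      calc ‖f' (γ s) - f' (γ t)‖ ≤ L * ‖γ s - γ t‖ := this
        _ = L * ‖v‖ * |s - t| := by
            have : γ s - γ t = (s - t) • v := by simp only [hγ]; module
            rw [this, norm_smul, Real.norm_eq_abs]; ring
        _ ≤ (Real.toNNReal (L * ‖v‖)) * dist s t := by
            rw [Real.dist_eq]
            gcongr
            exact Real.le_coe_toNNReal _
    exact hlipg.continuousOn.inner continuousOn_const
  have hint : IntervalIntegrable (fun t => ⟪f' (γ t), v⟫) MeasureTheory.volume 0 1 :=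
    hcont.intervalIntegrable
  have hFTC : ∫ t in (0:ℝ)..1, ⟪f' (γ t), v⟫ = f (γ 1) - f (γ 0) :=
    intervalIntegral.integral_eq_sub_of_hasDerivAt hderiv hint
  -- pointwise bound on the derivative
  have hbound : ∀ t ∈ Set.Icc (0:ℝ) 1,
      ⟪f' (γ t), v⟫ ≤ ⟪f' x, v⟫ + L * ‖v‖ ^ 2 * t := by
    intro t ht
    have h1 : ⟪f' (γ t), v⟫ - ⟪f' x, v⟫ = ⟪f' (γ t) - f' x, v⟫ := by
      rw [inner_sub_left]
    have h2 : ⟪f' (γ t) - f' x, v⟫ ≤ ‖f' (γ t) - f' x‖ * ‖v‖ :=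
      real_inner_le_norm _ _
    have h3 : ‖f' (γ t) - f' x‖ ≤ L * (t * ‖v‖) := by
      have := hlip _ (hγmem t (by rw [Set.uIcc_of_le zero_le_one]; exact ht)) _ hx
      have he : γ t - x = t • v := by simp only [hγ]; module
      calc ‖f' (γ t) - f' x‖ ≤ L * ‖γ t - x‖ := this
        _ = L * (t * ‖v‖) := by
            rw [he, norm_smul, Real.norm_eq_abs, abs_of_nonneg ht.1]
    nlinarith [norm_nonneg v]
  have hmono : ∫ t in (0:ℝ)..1, ⟪f' (γ t), v⟫ ≤
      ∫ t in (0:ℝ)..1, (⟪f' x, v⟫ + L * ‖v‖ ^ 2 * t) := by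
    apply intervalIntegral.integral_mono_on zero_le_one hint
    · exact (intervalIntegrable_const).add
        ((intervalIntegral.intervalIntegrable_id).const_mul _)
    · exact hbound
  have hrhs : ∫ t in (0:ℝ)..1, (⟪f' x, v⟫ + L * ‖v‖ ^ 2 * t) =
      ⟪f' x, v⟫ + L * ‖v‖ ^ 2 / 2 := by
    rw [intervalIntegral.integral_add intervalIntegrable_const
      ((intervalIntegral.intervalIntegrable_id).const_mul _),
      intervalIntegral.integral_const,
      intervalIntegral.integral_const_mul, integral_id]
    simp [smul_eq_mul]
    ring
  have hdescent : f xp ≤ f x + ⟪f' x, v⟫ + L * ‖v‖ ^ 2 / 2 := by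
    have h0 : γ 0 = x := by simp [hγ]
    have h1 : γ 1 = xp := by simp [hγ, hv]
    have := hmono
    rw [hFTC, hrhs, h0, h1] at this
    linarith
  -- variational inequality of the projection
  have hproj : ∀ z ∈ C, ⟪(x - η • f' x) - xp, z - xp⟫ ≤ 0 := by
    have hinf : ‖(x - η • f' x) - xp‖ = ⨅ w : C, ‖(x - η • f' x) - w‖ := by
      haveI : Nonempty C := ⟨⟨xp, hxpC⟩⟩
      have hbb : BddBelow (Set.range fun w : C =>
          ‖(x - η • f' x) - (w : EuclideanSpace ℝ (Fin n))‖) := by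
        refine ⟨0, ?_⟩
        rintro r ⟨w, rfl⟩
        positivity
      apply le_antisymm
      · exact le_ciInf fun w => hxp w w.2
      · exact ciInf_le hbb ⟨xp, hxpC⟩
    exact (norm_eq_iInf_iff_real_inner_le_zero hCcv hxpC).mp hinf
  have hkey : ⟪f' x, v⟫ ≤ -(‖v‖ ^ 2 / η) := by
    have := hproj x hx
    have he : (x - η • f' x) - xp = -v - η • f' x := by simp only [hv]; module
    have he2 : x - xp = -v := by simp only [hv]; module
    rw [he, he2, inner_sub_left, inner_smul_left] at this
    have hnn : ⟪-v, -v⟫ = ‖v‖ ^ 2 := by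
      rw [inner_neg_neg, real_inner_self_eq_norm_sq]
    have hni : ⟪f' x, -v⟫ = -⟪f' x, v⟫ := by rw [inner_neg_right]
    rw [hnn, hni] at this
    simp only [starRingEnd_apply, star_trivial] at this
    have h2 : ‖v‖ ^ 2 / η ≤ -⟪f' x, v⟫ := by
      rw [div_le_iff₀ hη]; nlinarith
    linarith
  have hLη : L ≤ 1 / η := by
    rw [le_div_iff₀ hη]
    rw [le_div_iff₀ hL] at hηL
    linarith
  have hvnn : (0:ℝ) ≤ ‖v‖ ^ 2 := by positivity
  have : L * ‖v‖ ^ 2 / 2 ≤ (1/η) * ‖v‖ ^ 2 / 2 := by gcongr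
  have hfinal : f xp ≤ f x - ‖v‖ ^ 2 / η + (1/η) * ‖v‖ ^ 2 / 2 := by linarith
  have : f x - ‖v‖ ^ 2 / η + (1/η) * ‖v‖ ^ 2 / 2 = f x - 1 / (2 * η) * ‖v‖ ^ 2 := by
    field_simp; ring
  linarith [this ▸ hfinal]
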